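/- For integers 1 ≤ s ≤ k, the rational number (1/((3+x)^s(1−x)))_{x^{k−s}}, i.e. the coefficient of x^(k−s) in the formal power series expansion of 1/((3+x)^s(1−x)), equals (1/(4^s 3^k))(3^k + (−1)^(k−s) Σ_{i=0}^{s−1} binom(k−s+i,i) 3^(s−1−i) 4^i). -/

import Mathlib

open PowerSeries Finset

noncomputable def fsq (s n : ℕ) : ℚ :=
  (1 / (4 ^ s * 3 ^ (n + s))) *
    (3 ^ (n + s) + (-1 : ℚ) ^ n *
      ∑ i ∈ Finset.range s, ((n + i).choose i : ℚ) * 3 ^ (s - 1 - i) * 4 ^ i)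

noncomputable def gsq (j n : ℕ) : ℚ := (-1) ^ n * ((n + j).choose j) / 3 ^ (n + j + 1)

lemma coeff_mul_3X_zero (h : ℚ⟦X⟧) :
    PowerSeries.coeff (R := ℚ) 0 (h * (3 + X)) = 3 * PowerSeries.coeff (R := ℚ) 0 h := by
  rw [mul_add, map_add, coeff_zero_mul_X, add_zero,
    show (3 : ℚ⟦X⟧) = PowerSeries.C (R := ℚ) 3 from (map_ofNat _ 3).symm, coeff_mul_C]
  ring

lemma coeff_mul_3X_succ (h : ℚ⟦X⟧) (n : ℕ) :
    PowerSeries.coeff (R := ℚ) (n + 1) (h * (3 + X)) =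
      3 * PowerSeries.coeff (R := ℚ) (n + 1) h + PowerSeries.coeff (R := ℚ) n h := by
  rw [mul_add, map_add, coeff_succ_mul_X,
    show (3 : ℚ⟦X⟧) = PowerSeries.C (R := ℚ) 3 from (map_ofNat _ 3).symm, coeff_mul_C]
  ring

lemma coeff_mul_1X_zero (h : ℚ⟦X⟧) :
    PowerSeries.coeff (R := ℚ) 0 (h * (1 - X)) = PowerSeries.coeff (R := ℚ) 0 h := by
  rw [mul_sub, map_sub, coeff_zero_mul_X, sub_zero, mul_one]

lemma coeff_mul_1X_succ (h : ℚ⟦X⟧) (n : ℕ) :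
    PowerSeries.coeff (R := ℚ) (n + 1) (h * (1 - X)) =
      PowerSeries.coeff (R := ℚ) (n + 1) h - PowerSeries.coeff (R := ℚ) n h := by
  rw [mul_sub, map_sub, coeff_succ_mul_X, mul_one]

lemma gsq_step (j : ℕ) : PowerSeries.mk (gsq (j + 1)) * (3 + X) = PowerSeries.mk (gsq j) := by
  ext n
  cases n with
  | zero =>
      rw [coeff_mul_3X_zero, coeff_mk, coeff_mk]
      simp [gsq, Nat.choose_self]
      ring
  | succ n =>
      rw [coeff_mul_3X_succ, coeff_mk, coeff_mk, coeff_mk]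
      unfold gsq
      have hp : ((n + 1 + (j + 1)).choose (j + 1) : ℚ) =
          ((n + (j + 1)).choose j : ℚ) + ((n + (j + 1)).choose (j + 1) : ℚ) := by
        have : n + 1 + (j + 1) = (n + (j + 1)) + 1 := by ring
        rw [this, Nat.choose_succ_succ']
        push_cast
        ring
      have h1 : n + 1 + j = n + (j + 1) := by ring
      rw [hp, h1]
      have h3 : (3 : ℚ) ^ (n + (j + 1) + 1 + 1) = 3 * 3 ^ (n + (j + 1) + 1) := by ring
      have h4 : (3 : ℚ) ^ (n + (j + 1) + 1) ≠ 0 := by positivity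
      field_simp
      ring

lemma gsq_zero : PowerSeries.mk (gsq 0) * (3 + X) = 1 := by
  ext n
  cases n with
  | zero =>
      rw [coeff_mul_3X_zero, coeff_mk]
      simp [gsq]
  | succ n =>
      rw [coeff_mul_3X_succ, coeff_mk, coeff_mk]
      unfold gsq
      have h4 : (3 : ℚ) ^ (n + 1) ≠ 0 := by positivity
      simp [pow_succ]
      field_simp
      ring

lemma gsq_inv (j : ℕ) : PowerSeries.mk (gsq j) * (3 + X) ^ (j + 1) = 1 := by
  induction j with
  | zero => simpa using gsq_zero
  | succ j ih =>
      have : ((3 + X : ℚ⟦X⟧)) ^ (j + 1 + 1) = (3 + X) * (3 + X) ^ (j + 1) := by ring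
      rw [this, ← mul_assoc, gsq_step, ih]

lemma fsq_rec (s n : ℕ) : 4 * fsq (s + 1) n = fsq s n + gsq s n := by
  unfold fsq gsq
  have hsplit : ∑ i ∈ Finset.range (s + 1),
      ((n + i).choose i : ℚ) * 3 ^ (s + 1 - 1 - i) * 4 ^ i
      = (∑ i ∈ Finset.range s, ((n + i).choose i : ℚ) * 3 ^ (s - i) * 4 ^ i)
        + ((n + s).choose s : ℚ) * 4 ^ s := by
    rw [Finset.sum_range_succ]
    simp
  rw [hsplit]
  have h3 : ∑ i ∈ Finset.range s, ((n + i).choose i : ℚ) * 3 ^ (s - i) * 4 ^ i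
      = 3 * ∑ i ∈ Finset.range s, ((n + i).choose i : ℚ) * 3 ^ (s - 1 - i) * 4 ^ i := by
    rw [Finset.mul_sum]
    refine Finset.sum_congr rfl fun i hi => ?_
    have hi' : i < s := Finset.mem_range.mp hi
    have : s - i = (s - 1 - i) + 1 := by omega
    rw [this, pow_succ]
    ring
  rw [h3]
  have e1 : n + (s + 1) = n + s + 1 := by ring
  rw [e1]
  have h4 : (4 : ℚ) ^ (s + 1) = 4 * 4 ^ s := by ring
  have h5 : (3 : ℚ) ^ (n + s + 1) = 3 * 3 ^ (n + s) := by ring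
  have p1 : (4 : ℚ) ^ s ≠ 0 := by positivity
  have p2 : (3 : ℚ) ^ (n + s) ≠ 0 := by positivity
  field_simp [h4, h5]
  ring

lemma fsq_zero : PowerSeries.mk (fsq 0) * (1 - X) = 1 := by
  have : PowerSeries.mk (fsq 0) = PowerSeries.mk fun _ => (1 : ℚ) := by
    ext n; simp [fsq]
  rw [this]
  ext n
  cases n with
  | zero => rw [coeff_mul_1X_zero]; simp
  | succ n => rw [coeff_mul_1X_succ]; simp

lemma fsq_inv (s : ℕ) : PowerSeries.mk (fsq s) * ((3 + X) ^ s * (1 - X)) = 1 := by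
  induction s with
  | zero => simpa using fsq_zero
  | succ s ih =>
      have hC : (PowerSeries.C (R := ℚ) 4) * PowerSeries.mk (fsq (s + 1))
          = PowerSeries.mk (fsq s) + PowerSeries.mk (gsq s) := by
        ext n
        rw [PowerSeries.coeff_C_mul, map_add, coeff_mk, coeff_mk, coeff_mk, ← fsq_rec]
      have h4 : (PowerSeries.C (R := ℚ) 4) ≠ 0 := by
        simp only [ne_eq, _root_.map_eq_zero]; norm_num
      apply mul_left_cancel₀ h4
      rw [mul_one, ← mul_assoc, hC]
      have expand : (PowerSeries.mk (fsq s) + PowerSeries.mk (gsq s)) *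
          ((3 + X) ^ (s + 1) * (1 - X))
          = (PowerSeries.mk (fsq s) * ((3 + X) ^ s * (1 - X))) * (3 + X)
            + (PowerSeries.mk (gsq s) * (3 + X) ^ (s + 1)) * (1 - X) := by
        ring
      rw [expand, ih, gsq_inv, one_mul, one_mul]
      have : (PowerSeries.C (R := ℚ) 4 : ℚ⟦X⟧) = 4 := by
        simp [map_ofNat]
      rw [this]
      ring

theorem stmt19 (k s : ℕ) (hs : 1 ≤ s) (hsk : s ≤ k) :
    PowerSeries.coeff (R := ℚ) (k - s) (((3 + PowerSeries.X) ^ s * (1 - PowerSeries.X))⁻¹) =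
      (1 / (4 ^ s * 3 ^ k)) *
        (3 ^ k + (-1 : ℚ) ^ (k - s) *
          ∑ i ∈ Finset.range s, ((k - s + i).choose i : ℚ) * 3 ^ (s - 1 - i) * 4 ^ i) := by
  have h0 : PowerSeries.constantCoeff (R := ℚ) ((3 + PowerSeries.X) ^ s * (1 - PowerSeries.X)) ≠ 0 := by
    have : (3 : ℚ⟦X⟧) = PowerSeries.C (R := ℚ) 3 := (map_ofNat _ 3).symm
    simp only [map_mul, map_pow, map_add, map_sub, map_one, PowerSeries.constantCoeff_X,
      this, PowerSeries.constantCoeff_C]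
    norm_num
  have hinv : ((3 + PowerSeries.X) ^ s * (1 - PowerSeries.X))⁻¹ = PowerSeries.mk (fsq s) :=
    (PowerSeries.inv_eq_iff_mul_eq_one h0).mpr (fsq_inv s)
  rw [hinv, coeff_mk]
  unfold fsq
  rw [Nat.sub_add_cancel hsk]
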